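/- arXiv:1510.05906 — 4 statements merged into one kernel-verified Lean document; each statement's English description precedes it below -/
import Mathlib

section
/- Let A₁, A₂ be m×n complex matrices and B₁, B₂ be n×m complex matrices (more generally Aᵢ of size m×nᵢ and Bᵢ of size nᵢ×m). Define the block matrices A₃ = [A₁ | A₂ + A₁B₁A₂] (size m×(n₁+n₂)) and B₃ = [B₁; B₂] (size (n₁+n₂)×m, stacked vertically). Then det(I + B₃A₃) = det(I + B₁A₁)·det(I + B₂A₂). -/
open Matrix

/-- Multiplicativity of the "small" determinants under the block composition
`A₃ = [A₁ | A₂ + A₁B₁A₂]`, `B₃ = [B₁; B₂]`. -/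
theorem stmt2 {m n₁ n₂ : ℕ}
    (A₁ : Matrix (Fin m) (Fin n₁) ℂ) (A₂ : Matrix (Fin m) (Fin n₂) ℂ)
    (B₁ : Matrix (Fin n₁) (Fin m) ℂ) (B₂ : Matrix (Fin n₂) (Fin m) ℂ) :
    (1 + Matrix.fromRows B₁ B₂ * Matrix.fromCols A₁ (A₂ + A₁ * B₁ * A₂)).det
      = (1 + B₁ * A₁).det * (1 + B₂ * A₂).det := by
  rw [fromRows_mul_fromCols]
  have hone : (1 : Matrix (Fin n₁ ⊕ Fin n₂) (Fin n₁ ⊕ Fin n₂) ℂ)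
      = fromBlocks 1 0 0 1 := by simp [fromBlocks_one]
  have key : (1 : Matrix (Fin n₁ ⊕ Fin n₂) (Fin n₁ ⊕ Fin n₂) ℂ) +
      fromBlocks (B₁ * A₁) (B₁ * (A₂ + A₁ * B₁ * A₂))
        (B₂ * A₁) (B₂ * (A₂ + A₁ * B₁ * A₂))
      = fromBlocks (1 + B₁ * A₁) 0 0 1 *
        (fromBlocks 1 0 (B₂ * A₁) 1 *
          fromBlocks 1 (B₁ * A₂) 0 (1 + B₂ * A₂)) := by
    rw [hone, fromBlocks_add, fromBlocks_multiply, fromBlocks_multiply]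
    simp only [Matrix.mul_one, Matrix.one_mul, Matrix.mul_zero, Matrix.zero_mul,
      add_zero, zero_add, Matrix.mul_add, Matrix.add_mul]
    congr 1 <;> simp only [Matrix.mul_assoc] <;> abel
  rw [key, det_mul, det_mul, det_fromBlocks_zero₂₁, det_fromBlocks_zero₂₁,
    det_fromBlocks_zero₁₂, det_one, det_one]
  ring
end

section
/- Let H = L²([0,1]²,ℂ) and let 𝒜 be the operator 𝒜u(k₁,k₂) = −∫₀¹ u(s,k₂)ds − f(k₁)∫₀¹ f(s)u(s,k₂)ds − ∫₀¹∫₀¹ u(s,t) ds dt, where f ∈ C([0,1],ℝ) with ∫₀¹ f = 0. Then for any λ ∉ {0, −1, −∫₀¹f², −2}, the operator λI − 𝒜 is invertible, and its inverse is λ⁻¹ (I − (λ+2)⁻¹⟨·⟩₂) ∘ (I − (λ+1)⁻¹⟨·⟩₁ − f(λ+⟨f²⟩)⁻¹⟨f·⟩₁), where ⟨u⟩₁(k₂) = ∫₀¹u(s,k₂)ds and ⟨u⟩₂ = ∫₀¹∫₀¹ u. -/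
set_option maxHeartbeats 1000000


open MeasureTheory Set

/-- For the operator `𝒜u = −⟨u⟩₁ − f⟨fu⟩₁ − ⟨u⟩₂` on `L²([0,1]²)` with `∫₀¹f = 0`,
and any `λ ∉ {0, −1, −∫f², −2}`, the operator `λI − 𝒜` is invertible and its inverse
is `λ⁻¹(I − (λ+2)⁻¹⟨·⟩₂) ∘ (I − (λ+1)⁻¹⟨·⟩₁ − f(λ+⟨f²⟩)⁻¹⟨f·⟩₁)`. -/
theorem stmt11 (f : ℝ → ℝ) (hf : ContinuousOn f (Icc 0 1))
    (hf0 : (∫ k in Icc (0 : ℝ) 1, f k) = 0)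
    (c : ℝ) (hc : c = ∫ k in Icc (0 : ℝ) 1, (f k) ^ 2)
    (μ : Measure (ℝ × ℝ)) (hμ : μ = volume.restrict ((Icc 0 1) ×ˢ (Icc 0 1)))
    (A : Lp ℂ 2 μ →L[ℂ] Lp ℂ 2 μ)
    (hA : ∀ u : Lp ℂ 2 μ, (A u : ℝ × ℝ → ℂ) =ᵐ[μ]
      fun p => -(∫ s in Icc (0 : ℝ) 1, (u : ℝ × ℝ → ℂ) (s, p.2)) -
        (f p.1 : ℂ) * (∫ s in Icc (0 : ℝ) 1, (f s : ℂ) * (u : ℝ × ℝ → ℂ) (s, p.2)) -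
        ∫ q, (u : ℝ × ℝ → ℂ) q ∂μ)
    (l : ℂ) (hl : l ∉ ({0, -1, -(c : ℂ), -2} : Set ℂ)) :
    IsUnit (l • (1 : Lp ℂ 2 μ →L[ℂ] Lp ℂ 2 μ) - A) ∧
    ∀ u : Lp ℂ 2 μ,
      ((Ring.inverse (l • (1 : Lp ℂ 2 μ →L[ℂ] Lp ℂ 2 μ) - A)) u : ℝ × ℝ → ℂ) =ᵐ[μ]
        fun p => l⁻¹ *
          ((fun q : ℝ × ℝ => (u : ℝ × ℝ → ℂ) q -
              (l + 1)⁻¹ * (∫ s in Icc (0 : ℝ) 1, (u : ℝ × ℝ → ℂ) (s, q.2)) -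
              (f q.1 : ℂ) * (l + (c : ℂ))⁻¹ *
                ∫ s in Icc (0 : ℝ) 1, (f s : ℂ) * (u : ℝ × ℝ → ℂ) (s, q.2)) p -
            (l + 2)⁻¹ * ∫ q, ((u : ℝ × ℝ → ℂ) q -
              (l + 1)⁻¹ * (∫ s in Icc (0 : ℝ) 1, (u : ℝ × ℝ → ℂ) (s, q.2)) -
              (f q.1 : ℂ) * (l + (c : ℂ))⁻¹ *
                ∫ s in Icc (0 : ℝ) 1, (f s : ℂ) * (u : ℝ × ℝ → ℂ) (s, q.2)) ∂μ) := by
  obtain ⟨hl0, hl1, hlc, hl2⟩ : l ≠ 0 ∧ l ≠ -1 ∧ l ≠ -(c : ℂ) ∧ l ≠ -2 := by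
    simp only [mem_insert_iff, mem_singleton_iff, not_or] at hl
    exact ⟨hl.1, hl.2.1, hl.2.2.1, hl.2.2.2⟩
  have hl1' : l + 1 ≠ 0 := fun h => hl1 (by linear_combination h)
  have hlc' : l + (c : ℂ) ≠ 0 := fun h => hlc (by linear_combination h)
  have hl2' : l + 2 ≠ 0 := fun h => hl2 (by linear_combination h)
  have hμ2 : μ = (volume.restrict (Icc (0:ℝ) 1)).prod (volume.restrict (Icc (0:ℝ) 1)) := by
    rw [hμ, Measure.prod_restrict, ← Measure.volume_eq_prod]
  haveI hPν : IsProbabilityMeasure (volume.restrict (Icc (0:ℝ) 1)) := by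
    constructor
    rw [Measure.restrict_apply_univ, Real.volume_Icc]
    norm_num
  haveI : IsProbabilityMeasure μ := by rw [hμ2]; infer_instance
  have hfR : IntegrableOn f (Icc (0:ℝ) 1) volume := hf.integrableOn_Icc
  have hf2R : IntegrableOn (fun s => f s ^ 2) (Icc (0:ℝ) 1) volume :=
    (hf.pow 2).integrableOn_Icc
  have hfc : Integrable (fun s => (f s : ℂ)) (volume.restrict (Icc (0:ℝ) 1)) :=
    hfR.ofReal
  have hf2c : Integrable (fun s => (f s : ℂ) ^ 2) (volume.restrict (Icc (0:ℝ) 1)) := by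
    have h := hf2R.ofReal (𝕜 := ℂ)
    simpa using h
  have hIf : (∫ s in Icc (0:ℝ) 1, (f s : ℂ)) = 0 := by
    have h := Complex.ofRealCLM.integral_comp_comm hfR
    simp only [Complex.ofRealCLM_apply] at h
    rw [h, hf0, Complex.ofReal_zero]
  have hIf2 : (∫ s in Icc (0:ℝ) 1, (f s : ℂ) ^ 2) = (c : ℂ) := by
    have h := Complex.ofRealCLM.integral_comp_comm hf2R
    simp only [Complex.ofRealCLM_apply, Complex.ofReal_pow] at h
    rw [h, hc]
  -- slice integral computations
  have hslice1 : ∀ a b d : ℂ,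
      (∫ s in Icc (0:ℝ) 1, (-a - (f s : ℂ) * b - d)) = -a - d := by
    intro a b d
    have h1 : ∀ s : ℝ, -a - (f s : ℂ) * b - d = (-a - d) + (f s : ℂ) * (-b) := fun s => by ring
    simp_rw [h1]
    rw [integral_add (integrable_const _) (hfc.mul_const _), integral_const,
      integral_mul_const, hIf]
    simp
  have hslice2 : ∀ a b d : ℂ,
      (∫ s in Icc (0:ℝ) 1, ((f s : ℂ) * (-a - (f s : ℂ) * b - d))) = -(c : ℂ) * b := by
    intro a b d
    have h1 : ∀ s : ℝ, (f s : ℂ) * (-a - (f s : ℂ) * b - d)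
        = (f s : ℂ) * (-a - d) + (f s : ℂ) ^ 2 * (-b) := fun s => by ring
    simp_rw [h1]
    rw [integral_add (hfc.mul_const _) (hf2c.mul_const _), integral_mul_const,
      integral_mul_const, hIf, hIf2]
    ring
  -- the main double-integral computation
  have hbig : ∀ v : Lp ℂ 2 μ, ∀ a₀ a b d : ℂ,
      (∫ q, (a₀ * (v : ℝ × ℝ → ℂ) q
          + a * (∫ s in Icc (0:ℝ) 1, (v : ℝ × ℝ → ℂ) (s, q.2))
          + b * ((f q.1 : ℂ) * (∫ s in Icc (0:ℝ) 1, (f s : ℂ) * (v : ℝ × ℝ → ℂ) (s, q.2)))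
          + d) ∂μ)
        = a₀ * (∫ q, (v : ℝ × ℝ → ℂ) q ∂μ) + a * (∫ q, (v : ℝ × ℝ → ℂ) q ∂μ) + d := by
    intro v a₀ a b d
    have hv : Integrable (fun z => (v : ℝ × ℝ → ℂ) z) μ := (Lp.memLp v).integrable one_le_two
    have hfmeas : AEStronglyMeasurable (fun z : ℝ × ℝ => (f z.1 : ℂ)) μ := by
      rw [hμ2]
      have h1 : AEMeasurable f (volume.restrict (Icc (0:ℝ) 1)) :=
        hf.aemeasurable measurableSet_Icc
      have h2 : AEMeasurable (fun z : ℝ × ℝ => f z.1)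
          ((volume.restrict (Icc (0:ℝ) 1)).prod (volume.restrict (Icc (0:ℝ) 1))) :=
        h1.comp_quasiMeasurePreserving Measure.quasiMeasurePreserving_fst
      exact (Complex.measurable_ofReal.comp_aemeasurable h2).aestronglyMeasurable
    obtain ⟨M, hM⟩ : ∃ M, ∀ s ∈ Icc (0:ℝ) 1, ‖f s‖ ≤ M :=
      isCompact_Icc.exists_bound_of_continuousOn hf
    have hmem : ∀ᵐ z ∂μ, z ∈ (Icc (0:ℝ) 1) ×ˢ (Icc (0:ℝ) 1) := by
      rw [hμ]; exact ae_restrict_mem (measurableSet_Icc.prod measurableSet_Icc)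
    have hfbdd : ∀ᵐ z ∂μ, ‖(fun z : ℝ × ℝ => (f z.1 : ℂ)) z‖ ≤ M := by
      filter_upwards [hmem] with z hz
      simpa using hM z.1 hz.1
    have hfv : Integrable (fun z : ℝ × ℝ => (f z.1 : ℂ) * (v : ℝ × ℝ → ℂ) z) μ :=
      hv.bdd_mul hfmeas hfbdd
    set w : ℝ × ℝ → ℂ := ((v : ℝ × ℝ → ℂ)) with hw
    rw [hμ2] at hv hfv ⊢
    have IP : Integrable (fun y => ∫ s in Icc (0:ℝ) 1, w (s, y))
        (volume.restrict (Icc (0:ℝ) 1)) := hv.swap.integral_prod_left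
    have IQ : Integrable (fun y => ∫ s in Icc (0:ℝ) 1, (f s : ℂ) * w (s, y))
        (volume.restrict (Icc (0:ℝ) 1)) := hfv.swap.integral_prod_left
    have I0 : Integrable (fun q : ℝ × ℝ => a₀ * w q)
        ((volume.restrict (Icc (0:ℝ) 1)).prod (volume.restrict (Icc (0:ℝ) 1))) :=
      hv.const_mul a₀
    have I1 : Integrable (fun q : ℝ × ℝ => a * (∫ s in Icc (0:ℝ) 1, w (s, q.2)))
        ((volume.restrict (Icc (0:ℝ) 1)).prod (volume.restrict (Icc (0:ℝ) 1))) :=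
      (integrable_const a).mul_prod IP
    have I2 : Integrable (fun q : ℝ × ℝ =>
        b * ((f q.1 : ℂ) * (∫ s in Icc (0:ℝ) 1, (f s : ℂ) * w (s, q.2))))
        ((volume.restrict (Icc (0:ℝ) 1)).prod (volume.restrict (Icc (0:ℝ) 1))) := by
      have h := (hfc.const_mul b).mul_prod IQ
      exact h.congr (Filter.Eventually.of_forall fun z => by simp; ring)
    have I01 : Integrable (fun q : ℝ × ℝ => a₀ * w q
        + a * (∫ s in Icc (0:ℝ) 1, w (s, q.2)))
        ((volume.restrict (Icc (0:ℝ) 1)).prod (volume.restrict (Icc (0:ℝ) 1))) := I0.add I1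
    have I012 : Integrable (fun q : ℝ × ℝ => a₀ * w q
        + a * (∫ s in Icc (0:ℝ) 1, w (s, q.2))
        + b * ((f q.1 : ℂ) * (∫ s in Icc (0:ℝ) 1, (f s : ℂ) * w (s, q.2))))
        ((volume.restrict (Icc (0:ℝ) 1)).prod (volume.restrict (Icc (0:ℝ) 1))) := I01.add I2
    have e1 : (∫ q : ℝ × ℝ, a * (∫ s in Icc (0:ℝ) 1, w (s, q.2))
          ∂((volume.restrict (Icc (0:ℝ) 1)).prod (volume.restrict (Icc (0:ℝ) 1))))
        = a * ∫ z, w z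
          ∂((volume.restrict (Icc (0:ℝ) 1)).prod (volume.restrict (Icc (0:ℝ) 1))) := by
      rw [integral_const_mul]
      congr 1
      calc (∫ q : ℝ × ℝ, (∫ s in Icc (0:ℝ) 1, w (s, q.2))
            ∂((volume.restrict (Icc (0:ℝ) 1)).prod (volume.restrict (Icc (0:ℝ) 1))))
          = ∫ q : ℝ × ℝ, (1 : ℂ) * (∫ s in Icc (0:ℝ) 1, w (s, q.2))
            ∂((volume.restrict (Icc (0:ℝ) 1)).prod (volume.restrict (Icc (0:ℝ) 1))) := by
            simp
        _ = (∫ _x in Icc (0:ℝ) 1, (1 : ℂ))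
              * ∫ y in Icc (0:ℝ) 1, (∫ s in Icc (0:ℝ) 1, w (s, y)) :=
            integral_prod_mul (fun _ => (1 : ℂ)) (fun y => ∫ s in Icc (0:ℝ) 1, w (s, y))
        _ = ∫ y in Icc (0:ℝ) 1, (∫ s in Icc (0:ℝ) 1, w (s, y)) := by simp
        _ = ∫ z, w z
              ∂((volume.restrict (Icc (0:ℝ) 1)).prod (volume.restrict (Icc (0:ℝ) 1))) :=
            (integral_prod_symm _ hv).symm
    have e2 : (∫ q : ℝ × ℝ,
          b * ((f q.1 : ℂ) * (∫ s in Icc (0:ℝ) 1, (f s : ℂ) * w (s, q.2)))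
          ∂((volume.restrict (Icc (0:ℝ) 1)).prod (volume.restrict (Icc (0:ℝ) 1)))) = 0 := by
      calc (∫ q : ℝ × ℝ,
            b * ((f q.1 : ℂ) * (∫ s in Icc (0:ℝ) 1, (f s : ℂ) * w (s, q.2)))
            ∂((volume.restrict (Icc (0:ℝ) 1)).prod (volume.restrict (Icc (0:ℝ) 1))))
          = ∫ q : ℝ × ℝ,
            (b * (f q.1 : ℂ)) * (∫ s in Icc (0:ℝ) 1, (f s : ℂ) * w (s, q.2))
            ∂((volume.restrict (Icc (0:ℝ) 1)).prod (volume.restrict (Icc (0:ℝ) 1))) := by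
            simp_rw [mul_assoc]
        _ = (∫ x in Icc (0:ℝ) 1, (b * (f x : ℂ)))
              * ∫ y in Icc (0:ℝ) 1, (∫ s in Icc (0:ℝ) 1, (f s : ℂ) * w (s, y)) :=
            integral_prod_mul (fun x => b * (f x : ℂ))
              (fun y => ∫ s in Icc (0:ℝ) 1, (f s : ℂ) * w (s, y))
        _ = 0 := by rw [integral_const_mul, hIf]; ring
    calc (∫ q : ℝ × ℝ, (a₀ * w q + a * (∫ s in Icc (0:ℝ) 1, w (s, q.2))
            + b * ((f q.1 : ℂ) * (∫ s in Icc (0:ℝ) 1, (f s : ℂ) * w (s, q.2))) + d)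
            ∂((volume.restrict (Icc (0:ℝ) 1)).prod (volume.restrict (Icc (0:ℝ) 1))))
        = (∫ q : ℝ × ℝ, (a₀ * w q + a * (∫ s in Icc (0:ℝ) 1, w (s, q.2))
            + b * ((f q.1 : ℂ) * (∫ s in Icc (0:ℝ) 1, (f s : ℂ) * w (s, q.2))))
            ∂((volume.restrict (Icc (0:ℝ) 1)).prod (volume.restrict (Icc (0:ℝ) 1))))
          + ∫ _q : ℝ × ℝ, d
            ∂((volume.restrict (Icc (0:ℝ) 1)).prod (volume.restrict (Icc (0:ℝ) 1))) :=
          integral_add I012 (integrable_const d)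
      _ = ((∫ q : ℝ × ℝ, (a₀ * w q + a * (∫ s in Icc (0:ℝ) 1, w (s, q.2)))
            ∂((volume.restrict (Icc (0:ℝ) 1)).prod (volume.restrict (Icc (0:ℝ) 1))))
          + ∫ q : ℝ × ℝ, b * ((f q.1 : ℂ) * (∫ s in Icc (0:ℝ) 1, (f s : ℂ) * w (s, q.2)))
            ∂((volume.restrict (Icc (0:ℝ) 1)).prod (volume.restrict (Icc (0:ℝ) 1))))
          + ∫ _q : ℝ × ℝ, d
            ∂((volume.restrict (Icc (0:ℝ) 1)).prod (volume.restrict (Icc (0:ℝ) 1))) := by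
          exact congrArg (· + _) (integral_add I01 I2)
      _ = (((∫ q : ℝ × ℝ, a₀ * w q
            ∂((volume.restrict (Icc (0:ℝ) 1)).prod (volume.restrict (Icc (0:ℝ) 1))))
          + ∫ q : ℝ × ℝ, a * (∫ s in Icc (0:ℝ) 1, w (s, q.2))
            ∂((volume.restrict (Icc (0:ℝ) 1)).prod (volume.restrict (Icc (0:ℝ) 1))))
          + ∫ q : ℝ × ℝ, b * ((f q.1 : ℂ) * (∫ s in Icc (0:ℝ) 1, (f s : ℂ) * w (s, q.2)))
            ∂((volume.restrict (Icc (0:ℝ) 1)).prod (volume.restrict (Icc (0:ℝ) 1))))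
          + ∫ _q : ℝ × ℝ, d
            ∂((volume.restrict (Icc (0:ℝ) 1)).prod (volume.restrict (Icc (0:ℝ) 1))) := by
          exact congrArg (fun z => (z + _) + _) (integral_add I0 I1)
      _ = a₀ * (∫ q : ℝ × ℝ, w q
            ∂((volume.restrict (Icc (0:ℝ) 1)).prod (volume.restrict (Icc (0:ℝ) 1))))
          + a * (∫ q : ℝ × ℝ, w q
            ∂((volume.restrict (Icc (0:ℝ) 1)).prod (volume.restrict (Icc (0:ℝ) 1)))) + d := by
          rw [integral_const_mul, e1, e2, integral_const]
          simp [measure_univ]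
  -- lifting a.e. statements on the second coordinate
  have lift : ∀ q : ℝ → Prop,
      (∀ᵐ y ∂(volume.restrict (Icc (0:ℝ) 1)), q y) → (∀ᵐ p ∂μ, q p.2) := by
    intro q hq
    rw [hμ2]
    exact Measure.quasiMeasurePreserving_snd.tendsto_ae.eventually hq
  -- slice statistics of A v
  have stat1 : ∀ v : Lp ℂ 2 μ, ∀ᵐ y ∂(volume.restrict (Icc (0:ℝ) 1)),
      (∫ s in Icc (0:ℝ) 1, ((A v : Lp ℂ 2 μ) : ℝ × ℝ → ℂ) (s, y))
        = -(∫ s in Icc (0:ℝ) 1, (v : ℝ × ℝ → ℂ) (s, y)) - ∫ q, (v : ℝ × ℝ → ℂ) q ∂μ := by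
    intro v
    have h : ∀ᶠ z in ae ((volume.restrict (Icc (0:ℝ) 1)).prod (volume.restrict (Icc (0:ℝ) 1))),
        ((A v : Lp ℂ 2 μ) : ℝ × ℝ → ℂ) z = (fun p : ℝ × ℝ =>
          -(∫ s in Icc (0:ℝ) 1, (v : ℝ × ℝ → ℂ) (s, p.2)) -
          (f p.1 : ℂ) * (∫ s in Icc (0:ℝ) 1, (f s : ℂ) * (v : ℝ × ℝ → ℂ) (s, p.2)) -
          ∫ q, (v : ℝ × ℝ → ℂ) q ∂μ) z := by
      rw [← hμ2]; exact hA v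
    have h2 := (Measure.measurePreserving_swap.quasiMeasurePreserving.tendsto_ae).eventually h
    have h3 := Measure.ae_ae_of_ae_prod h2
    simp only [Prod.swap_prod_mk] at h3
    filter_upwards [h3] with y hy
    calc (∫ s in Icc (0:ℝ) 1, ((A v : Lp ℂ 2 μ) : ℝ × ℝ → ℂ) (s, y))
        = ∫ s in Icc (0:ℝ) 1,
            (-(∫ t in Icc (0:ℝ) 1, (v : ℝ × ℝ → ℂ) (t, y)) -
            (f s : ℂ) * (∫ t in Icc (0:ℝ) 1, (f t : ℂ) * (v : ℝ × ℝ → ℂ) (t, y)) -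
            ∫ q, (v : ℝ × ℝ → ℂ) q ∂μ) := integral_congr_ae hy
      _ = _ := hslice1 _ _ _
  have stat2 : ∀ v : Lp ℂ 2 μ, ∀ᵐ y ∂(volume.restrict (Icc (0:ℝ) 1)),
      (∫ s in Icc (0:ℝ) 1, (f s : ℂ) * ((A v : Lp ℂ 2 μ) : ℝ × ℝ → ℂ) (s, y))
        = -(c : ℂ) * ∫ s in Icc (0:ℝ) 1, (f s : ℂ) * (v : ℝ × ℝ → ℂ) (s, y) := by
    intro v
    have h : ∀ᶠ z in ae ((volume.restrict (Icc (0:ℝ) 1)).prod (volume.restrict (Icc (0:ℝ) 1))),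
        ((A v : Lp ℂ 2 μ) : ℝ × ℝ → ℂ) z = (fun p : ℝ × ℝ =>
          -(∫ s in Icc (0:ℝ) 1, (v : ℝ × ℝ → ℂ) (s, p.2)) -
          (f p.1 : ℂ) * (∫ s in Icc (0:ℝ) 1, (f s : ℂ) * (v : ℝ × ℝ → ℂ) (s, p.2)) -
          ∫ q, (v : ℝ × ℝ → ℂ) q ∂μ) z := by
      rw [← hμ2]; exact hA v
    have h2 := (Measure.measurePreserving_swap.quasiMeasurePreserving.tendsto_ae).eventually h
    have h3 := Measure.ae_ae_of_ae_prod h2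
    simp only [Prod.swap_prod_mk] at h3
    filter_upwards [h3] with y hy
    have hy' : (fun s => (f s : ℂ) * ((A v : Lp ℂ 2 μ) : ℝ × ℝ → ℂ) (s, y))
        =ᶠ[ae (volume.restrict (Icc (0:ℝ) 1))] (fun s => (f s : ℂ) *
          (-(∫ t in Icc (0:ℝ) 1, (v : ℝ × ℝ → ℂ) (t, y)) -
          (f s : ℂ) * (∫ t in Icc (0:ℝ) 1, (f t : ℂ) * (v : ℝ × ℝ → ℂ) (t, y)) -
          ∫ q, (v : ℝ × ℝ → ℂ) q ∂μ)) := by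
      filter_upwards [hy] with s hs
      beta_reduce
      rw [hs]
    calc (∫ s in Icc (0:ℝ) 1, (f s : ℂ) * ((A v : Lp ℂ 2 μ) : ℝ × ℝ → ℂ) (s, y))
        = ∫ s in Icc (0:ℝ) 1, ((f s : ℂ) *
            (-(∫ t in Icc (0:ℝ) 1, (v : ℝ × ℝ → ℂ) (t, y)) -
            (f s : ℂ) * (∫ t in Icc (0:ℝ) 1, (f t : ℂ) * (v : ℝ × ℝ → ℂ) (t, y)) -
            ∫ q, (v : ℝ × ℝ → ℂ) q ∂μ)) :=
          integral_congr_ae hy'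
      _ = _ := hslice2 _ _ _
  have stat3 : ∀ v : Lp ℂ 2 μ,
      (∫ q, ((A v : Lp ℂ 2 μ) : ℝ × ℝ → ℂ) q ∂μ) = -2 * ∫ q, (v : ℝ × ℝ → ℂ) q ∂μ := by
    intro v
    rw [integral_congr_ae (hA v)]
    calc (∫ q : ℝ × ℝ, (-(∫ s in Icc (0:ℝ) 1, (v : ℝ × ℝ → ℂ) (s, q.2)) -
            (f q.1 : ℂ) * (∫ s in Icc (0:ℝ) 1, (f s : ℂ) * (v : ℝ × ℝ → ℂ) (s, q.2)) -
            ∫ q, (v : ℝ × ℝ → ℂ) q ∂μ) ∂μ)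
        = ∫ q : ℝ × ℝ, ((0 : ℂ) * (v : ℝ × ℝ → ℂ) q
            + (-1 : ℂ) * (∫ s in Icc (0:ℝ) 1, (v : ℝ × ℝ → ℂ) (s, q.2))
            + (-1 : ℂ) * ((f q.1 : ℂ) * (∫ s in Icc (0:ℝ) 1, (f s : ℂ) * (v : ℝ × ℝ → ℂ) (s, q.2)))
            + (-(∫ q, (v : ℝ × ℝ → ℂ) q ∂μ))) ∂μ :=
          integral_congr_ae (Filter.Eventually.of_forall fun q => by beta_reduce; ring)
      _ = (0 : ℂ) * (∫ q, (v : ℝ × ℝ → ℂ) q ∂μ) + (-1 : ℂ) * (∫ q, (v : ℝ × ℝ → ℂ) q ∂μ)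
            + (-(∫ q, (v : ℝ × ℝ → ℂ) q ∂μ)) := hbig v 0 (-1) (-1) _
      _ = -2 * ∫ q, (v : ℝ × ℝ → ℂ) q ∂μ := by ring
  -- iterated formulas
  have F2 : ∀ u : Lp ℂ 2 μ, ((A (A u) : Lp ℂ 2 μ) : ℝ × ℝ → ℂ) =ᵐ[μ] fun p =>
      (∫ s in Icc (0:ℝ) 1, (u : ℝ × ℝ → ℂ) (s, p.2))
        + (c : ℂ) * ((f p.1 : ℂ) * (∫ s in Icc (0:ℝ) 1, (f s : ℂ) * (u : ℝ × ℝ → ℂ) (s, p.2)))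
        + 3 * (∫ q, (u : ℝ × ℝ → ℂ) q ∂μ) := by
    intro u
    filter_upwards [hA (A u), lift _ (stat1 u), lift _ (stat2 u)] with p h0 h1 h2
    rw [h0]
    beta_reduce
    rw [h1, h2, stat3 u]
    beta_reduce
    ring
  have F3 : ∀ u : Lp ℂ 2 μ, ((A (A (A u)) : Lp ℂ 2 μ) : ℝ × ℝ → ℂ) =ᵐ[μ] fun p =>
      -(∫ s in Icc (0:ℝ) 1, (u : ℝ × ℝ → ℂ) (s, p.2))
        - (c : ℂ) ^ 2 * ((f p.1 : ℂ) * (∫ s in Icc (0:ℝ) 1, (f s : ℂ) * (u : ℝ × ℝ → ℂ) (s, p.2)))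
        - 7 * (∫ q, (u : ℝ × ℝ → ℂ) q ∂μ) := by
    intro u
    filter_upwards [hA (A (A u)), lift _ (stat1 (A u)), lift _ (stat2 (A u)),
      lift _ (stat1 u), lift _ (stat2 u)] with p h0 h1 h2 h3 h4
    rw [h0]
    beta_reduce
    rw [h1, h2, h3, h4, stat3 (A u), stat3 u]
    beta_reduce
    ring
  have F4 : ∀ u : Lp ℂ 2 μ, ((A (A (A (A u))) : Lp ℂ 2 μ) : ℝ × ℝ → ℂ) =ᵐ[μ] fun p =>
      (∫ s in Icc (0:ℝ) 1, (u : ℝ × ℝ → ℂ) (s, p.2))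
        + (c : ℂ) ^ 3 * ((f p.1 : ℂ) * (∫ s in Icc (0:ℝ) 1, (f s : ℂ) * (u : ℝ × ℝ → ℂ) (s, p.2)))
        + 15 * (∫ q, (u : ℝ × ℝ → ℂ) q ∂μ) := by
    intro u
    filter_upwards [hA (A (A (A u))), lift _ (stat1 (A (A u))), lift _ (stat2 (A (A u))),
      lift _ (stat1 (A u)), lift _ (stat2 (A u)),
      lift _ (stat1 u), lift _ (stat2 u)] with p h0 h1 h2 h3 h4 h5 h6
    rw [h0]
    beta_reduce
    rw [h1, h2, h3, h4, h5, h6, stat3 (A (A u)), stat3 (A u), stat3 u]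
    beta_reduce
    ring
  -- the candidate inverse
  set b2 : ℂ := l + (3 + (c : ℂ)) with hb2
  set b1 : ℂ := l ^ 2 + (3 + (c : ℂ)) * l + (2 + 3 * (c : ℂ)) with hb1
  set b0 : ℂ := l ^ 3 + (3 + (c : ℂ)) * l ^ 2 + (2 + 3 * (c : ℂ)) * l + 2 * (c : ℂ) with hb0
  set G : ℂ := l * (l + 1) * (l + (c : ℂ)) * (l + 2) with hG
  have hGne : G ≠ 0 := mul_ne_zero (mul_ne_zero (mul_ne_zero hl0 hl1') hlc') hl2'
  set B : Lp ℂ 2 μ →L[ℂ] Lp ℂ 2 μ :=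
    G⁻¹ • (A * A * A + b2 • (A * A) + b1 • A + b0 • (1 : Lp ℂ 2 μ →L[ℂ] Lp ℂ 2 μ)) with hBdef
  have hBlin : ∀ u : Lp ℂ 2 μ,
      B u = G⁻¹ • (A (A (A u)) + b2 • A (A u) + b1 • A u + b0 • u) := by
    intro u
    simp [hBdef, ContinuousLinearMap.mul_apply]
  have hABu : ∀ u : Lp ℂ 2 μ,
      A (B u) = G⁻¹ • (A (A (A (A u))) + b2 • A (A (A u)) + b1 • A (A u) + b0 • A u) := by
    intro u
    rw [hBlin u]
    simp [map_add, _root_.map_smul]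
  -- a.e. formula for B u
  have FB : ∀ u : Lp ℂ 2 μ, ((B u : Lp ℂ 2 μ) : ℝ × ℝ → ℂ) =ᵐ[μ] fun p =>
      G⁻¹ * ((-(∫ s in Icc (0:ℝ) 1, (u : ℝ × ℝ → ℂ) (s, p.2))
          - (c : ℂ) ^ 2 * ((f p.1 : ℂ) * (∫ s in Icc (0:ℝ) 1, (f s : ℂ) * (u : ℝ × ℝ → ℂ) (s, p.2)))
          - 7 * (∫ q, (u : ℝ × ℝ → ℂ) q ∂μ))
        + b2 * ((∫ s in Icc (0:ℝ) 1, (u : ℝ × ℝ → ℂ) (s, p.2))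
          + (c : ℂ) * ((f p.1 : ℂ) * (∫ s in Icc (0:ℝ) 1, (f s : ℂ) * (u : ℝ × ℝ → ℂ) (s, p.2)))
          + 3 * (∫ q, (u : ℝ × ℝ → ℂ) q ∂μ))
        + b1 * (-(∫ s in Icc (0:ℝ) 1, (u : ℝ × ℝ → ℂ) (s, p.2))
          - (f p.1 : ℂ) * (∫ s in Icc (0:ℝ) 1, (f s : ℂ) * (u : ℝ × ℝ → ℂ) (s, p.2))
          - (∫ q, (u : ℝ × ℝ → ℂ) q ∂μ))
        + b0 * (u : ℝ × ℝ → ℂ) p) := by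
    intro u
    rw [hBlin u]
    filter_upwards [Lp.coeFn_smul G⁻¹ (A (A (A u)) + b2 • A (A u) + b1 • A u + b0 • u),
      Lp.coeFn_add (A (A (A u)) + b2 • A (A u) + b1 • A u) (b0 • u),
      Lp.coeFn_add (A (A (A u)) + b2 • A (A u)) (b1 • A u),
      Lp.coeFn_add (A (A (A u))) (b2 • A (A u)),
      Lp.coeFn_smul b2 (A (A u)), Lp.coeFn_smul b1 (A u), Lp.coeFn_smul b0 u,
      F3 u, F2 u, hA u] with p g0 g1 g2 g3 g4 g5 g6 k3 k2 k1
    simp only [Pi.add_apply, Pi.smul_apply, smul_eq_mul] at g0 g1 g2 g3 g4 g5 g6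
    rw [g0, g1, g2, g3, g4, g5, g6, k3, k2, k1]
  have FAB : ∀ u : Lp ℂ 2 μ, ((A (B u) : Lp ℂ 2 μ) : ℝ × ℝ → ℂ) =ᵐ[μ] fun p =>
      G⁻¹ * (((∫ s in Icc (0:ℝ) 1, (u : ℝ × ℝ → ℂ) (s, p.2))
          + (c : ℂ) ^ 3 * ((f p.1 : ℂ) * (∫ s in Icc (0:ℝ) 1, (f s : ℂ) * (u : ℝ × ℝ → ℂ) (s, p.2)))
          + 15 * (∫ q, (u : ℝ × ℝ → ℂ) q ∂μ))
        + b2 * (-(∫ s in Icc (0:ℝ) 1, (u : ℝ × ℝ → ℂ) (s, p.2))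
          - (c : ℂ) ^ 2 * ((f p.1 : ℂ) * (∫ s in Icc (0:ℝ) 1, (f s : ℂ) * (u : ℝ × ℝ → ℂ) (s, p.2)))
          - 7 * (∫ q, (u : ℝ × ℝ → ℂ) q ∂μ))
        + b1 * ((∫ s in Icc (0:ℝ) 1, (u : ℝ × ℝ → ℂ) (s, p.2))
          + (c : ℂ) * ((f p.1 : ℂ) * (∫ s in Icc (0:ℝ) 1, (f s : ℂ) * (u : ℝ × ℝ → ℂ) (s, p.2)))
          + 3 * (∫ q, (u : ℝ × ℝ → ℂ) q ∂μ))
        + b0 * (-(∫ s in Icc (0:ℝ) 1, (u : ℝ × ℝ → ℂ) (s, p.2))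
          - (f p.1 : ℂ) * (∫ s in Icc (0:ℝ) 1, (f s : ℂ) * (u : ℝ × ℝ → ℂ) (s, p.2))
          - (∫ q, (u : ℝ × ℝ → ℂ) q ∂μ))) := by
    intro u
    rw [hABu u]
    filter_upwards [Lp.coeFn_smul G⁻¹ (A (A (A (A u))) + b2 • A (A (A u)) + b1 • A (A u) + b0 • A u),
      Lp.coeFn_add (A (A (A (A u))) + b2 • A (A (A u)) + b1 • A (A u)) (b0 • A u),
      Lp.coeFn_add (A (A (A (A u))) + b2 • A (A (A u))) (b1 • A (A u)),
      Lp.coeFn_add (A (A (A (A u)))) (b2 • A (A (A u))),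
      Lp.coeFn_smul b2 (A (A (A u))), Lp.coeFn_smul b1 (A (A u)), Lp.coeFn_smul b0 (A u),
      F4 u, F3 u, F2 u, hA u] with p g0 g1 g2 g3 g4 g5 g6 k4 k3 k2 k1
    simp only [Pi.add_apply, Pi.smul_apply, smul_eq_mul] at g0 g1 g2 g3 g4 g5 g6
    rw [g0, g1, g2, g3, g4, g5, g6, k4, k3, k2, k1]
  -- the key pointwise identity
  have hmain : ∀ u : Lp ℂ 2 μ, l • B u - A (B u) = u := by
    intro u
    apply Lp.ext
    filter_upwards [Lp.coeFn_sub (l • B u) (A (B u)), Lp.coeFn_smul l (B u),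
      FB u, FAB u] with p g1 g2 h1 h2
    rw [g1]
    simp only [Pi.sub_apply]
    rw [g2]
    simp only [Pi.smul_apply, smul_eq_mul]
    rw [h1, h2]
    beta_reduce
    rw [hb2, hb1, hb0, hG]
    field_simp
    ring
  have hmul1 : (l • (1 : Lp ℂ 2 μ →L[ℂ] Lp ℂ 2 μ) - A) * B = 1 := by
    refine ContinuousLinearMap.ext fun u => ?_
    simp only [ContinuousLinearMap.mul_apply, ContinuousLinearMap.sub_apply,
      ContinuousLinearMap.smul_apply, ContinuousLinearMap.one_apply]
    exact hmain u
  have hmul2 : B * (l • (1 : Lp ℂ 2 μ →L[ℂ] Lp ℂ 2 μ) - A) = 1 := by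
    refine ContinuousLinearMap.ext fun u => ?_
    simp only [ContinuousLinearMap.mul_apply, ContinuousLinearMap.sub_apply,
      ContinuousLinearMap.smul_apply, ContinuousLinearMap.one_apply]
    rw [map_sub, _root_.map_smul, hBlin (A u), ← hABu u]
    exact hmain u
  have hZ : ∀ u : Lp ℂ 2 μ,
      (∫ q, ((u : ℝ × ℝ → ℂ) q -
          (l + 1)⁻¹ * (∫ s in Icc (0:ℝ) 1, (u : ℝ × ℝ → ℂ) (s, q.2)) -
          (f q.1 : ℂ) * (l + (c : ℂ))⁻¹ *
            ∫ s in Icc (0:ℝ) 1, (f s : ℂ) * (u : ℝ × ℝ → ℂ) (s, q.2)) ∂μ)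
        = (∫ q, (u : ℝ × ℝ → ℂ) q ∂μ) - (l + 1)⁻¹ * (∫ q, (u : ℝ × ℝ → ℂ) q ∂μ) := by
    intro u
    calc (∫ q, ((u : ℝ × ℝ → ℂ) q -
            (l + 1)⁻¹ * (∫ s in Icc (0:ℝ) 1, (u : ℝ × ℝ → ℂ) (s, q.2)) -
            (f q.1 : ℂ) * (l + (c : ℂ))⁻¹ *
              ∫ s in Icc (0:ℝ) 1, (f s : ℂ) * (u : ℝ × ℝ → ℂ) (s, q.2)) ∂μ)
        = ∫ q : ℝ × ℝ, ((1 : ℂ) * (u : ℝ × ℝ → ℂ) q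
            + (-(l + 1)⁻¹) * (∫ s in Icc (0:ℝ) 1, (u : ℝ × ℝ → ℂ) (s, q.2))
            + (-(l + (c : ℂ))⁻¹) *
              ((f q.1 : ℂ) * (∫ s in Icc (0:ℝ) 1, (f s : ℂ) * (u : ℝ × ℝ → ℂ) (s, q.2)))
            + (0 : ℂ)) ∂μ := integral_congr_ae (Filter.Eventually.of_forall fun q => by beta_reduce; ring)
      _ = (1 : ℂ) * (∫ q, (u : ℝ × ℝ → ℂ) q ∂μ)
            + (-(l + 1)⁻¹) * (∫ q, (u : ℝ × ℝ → ℂ) q ∂μ) + (0 : ℂ) := hbig u 1 _ _ 0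
      _ = _ := by ring
  refine ⟨⟨⟨l • 1 - A, B, hmul1, hmul2⟩, rfl⟩, fun u => ?_⟩
  have hRinv : Ring.inverse (l • (1 : Lp ℂ 2 μ →L[ℂ] Lp ℂ 2 μ) - A) = B :=
    Ring.inverse_unit ⟨l • 1 - A, B, hmul1, hmul2⟩
  rw [hRinv]
  filter_upwards [FB u] with p h
  rw [h]
  beta_reduce
  rw [hZ u, hb2, hb1, hb0, hG]
  field_simp
  ring
end

section
/- With 𝒜 as in the two-dimensional example (𝒜u = −⟨u⟩₁ − f⟨fu⟩₁ − ⟨u⟩₂ on L²([0,1]²), ∫₀¹ f = 0, c := ∫₀¹ f²), the vector-valued traces of powers of 𝒜 are 𝛕(𝒜ⁿ) = (−1)ⁿ (0, 1 + cⁿ, 2ⁿ − 1) for all n ≥ 1, where 𝛕(A₀· + A₁⟨B₁·⟩₁ + A₂⟨B₂·⟩₂) = (Tr A₀, ⟨Tr B₁A₁⟩₁, ⟨Tr B₂A₂⟩₂). -/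
open MeasureTheory Set

/-- For `𝒜u = −⟨u⟩₁ − f⟨fu⟩₁ − ⟨u⟩₂` on `L²([0,1]²)` with `∫₀¹f = 0`, `c = ∫₀¹f²`:
for every `n ≥ 1` the power `𝒜ⁿ` has the canonical representation
`𝒜ⁿu = (−1)ⁿ(⟨u⟩₁ + cⁿ⁻¹ f⟨fu⟩₁ + (2ⁿ−1)⟨u⟩₂)` (i.e. `A₀ = 0`,
`A₁ = (−1)ⁿ(1, cⁿ⁻¹f)`, `B₁ = (1; f)ᵀ`, `A₂B₂ = (−1)ⁿ(2ⁿ−1)`), and the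
vector-valued trace `𝛕(𝒜ⁿ) = (Tr A₀, ⟨Tr B₁A₁⟩₁, ⟨Tr B₂A₂⟩₂)` equals
`(−1)ⁿ(0, 1 + cⁿ, 2ⁿ − 1)`. -/
theorem stmt13 (f : ℝ → ℝ) (hf : ContinuousOn f (Icc 0 1))
    (hf0 : (∫ k in Icc (0 : ℝ) 1, f k) = 0)
    (c : ℝ) (hc : c = ∫ k in Icc (0 : ℝ) 1, (f k) ^ 2)
    (μ : Measure (ℝ × ℝ)) (hμ : μ = volume.restrict ((Icc 0 1) ×ˢ (Icc 0 1)))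
    (A : Lp ℂ 2 μ →L[ℂ] Lp ℂ 2 μ)
    (hA : ∀ u : Lp ℂ 2 μ, (A u : ℝ × ℝ → ℂ) =ᵐ[μ]
      fun p => -(∫ s in Icc (0 : ℝ) 1, (u : ℝ × ℝ → ℂ) (s, p.2)) -
        (f p.1 : ℂ) * (∫ s in Icc (0 : ℝ) 1, (f s : ℂ) * (u : ℝ × ℝ → ℂ) (s, p.2)) -
        ∫ q, (u : ℝ × ℝ → ℂ) q ∂μ) :
    ∀ n : ℕ, 1 ≤ n →
      (∀ u : Lp ℂ 2 μ, ((A ^ n) u : ℝ × ℝ → ℂ) =ᵐ[μ]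
        fun p => (-1 : ℂ) ^ n *
          ((∫ s in Icc (0 : ℝ) 1, (u : ℝ × ℝ → ℂ) (s, p.2)) +
            (c : ℂ) ^ (n - 1) * (f p.1 : ℂ) *
              (∫ s in Icc (0 : ℝ) 1, (f s : ℂ) * (u : ℝ × ℝ → ℂ) (s, p.2)) +
            ((2 : ℂ) ^ n - 1) * ∫ q, (u : ℝ × ℝ → ℂ) q ∂μ)) ∧
      ((0 : ℂ),
        (∫ s in Icc (0 : ℝ) 1, (-1 : ℂ) ^ n * (1 + (c : ℂ) ^ (n - 1) * (f s : ℂ) ^ 2)),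
        (-1 : ℂ) ^ n * ((2 : ℂ) ^ n - 1))
        = ((0 : ℂ), (-1 : ℂ) ^ n * (1 + (c : ℂ) ^ n), (-1 : ℂ) ^ n * ((2 : ℂ) ^ n - 1)) := by
  subst hμ
  have hμν : volume.restrict ((Icc (0:ℝ) 1) ×ˢ (Icc (0:ℝ) 1)) =
      (volume.restrict (Icc (0:ℝ) 1)).prod (volume.restrict (Icc (0:ℝ) 1)) := by
    rw [Measure.prod_restrict, ← Measure.volume_eq_prod]
  haveI hPν : IsProbabilityMeasure (volume.restrict (Icc (0:ℝ) 1)) :=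
    ⟨by simp [Real.volume_Icc]⟩
  haveI hPM : IsProbabilityMeasure (volume.restrict ((Icc (0:ℝ) 1) ×ˢ (Icc (0:ℝ) 1))) := by
    rw [hμν]; infer_instance
  have hν1 : (volume.restrict (Icc (0:ℝ) 1)).real univ = 1 := by simp
  -- facts about f
  have hfI : Integrable (fun x => (f x : ℂ)) (volume.restrict (Icc (0:ℝ) 1)) :=
    (hf.integrableOn_Icc).ofReal
  have hsq : (fun x => ((f x : ℂ)) ^ 2) = fun x => (((f x) ^ 2 : ℝ) : ℂ) := by
    funext x; push_cast; ring
  have hf2I : Integrable (fun x => ((f x : ℂ)) ^ 2) (volume.restrict (Icc (0:ℝ) 1)) := by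
    rw [hsq]; exact ((hf.pow 2).integrableOn_Icc).ofReal
  have hIf : (∫ x in Icc (0:ℝ) 1, (f x : ℂ)) = 0 := by
    have h : (∫ x in Icc (0:ℝ) 1, (f x : ℂ)) = ((∫ x in Icc (0:ℝ) 1, f x : ℝ) : ℂ) :=
      integral_ofReal
    rw [h, hf0, Complex.ofReal_zero]
  have hIf2 : (∫ x in Icc (0:ℝ) 1, ((f x : ℂ)) ^ 2) = (c : ℂ) := by
    have h : (∫ x in Icc (0:ℝ) 1, ((f x) ^ 2 : ℝ) : ℂ) = ((∫ x in Icc (0:ℝ) 1, (f x) ^ 2 : ℝ) : ℂ) :=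
      integral_ofReal
    rw [show (fun x => ((f x : ℂ)) ^ 2) = fun x => (((f x) ^ 2 : ℝ) : ℂ) from hsq, h, ← hc]
  obtain ⟨B, hB⟩ : ∃ B, ∀ x ∈ Icc (0:ℝ) 1, ‖f x‖ ≤ B :=
    isCompact_Icc.exists_bound_of_continuousOn hf
  have hMae : ∀ᵐ x ∂(volume.restrict (Icc (0:ℝ) 1)), ‖(f x : ℂ)‖ ≤ B := by
    filter_upwards [ae_restrict_mem measurableSet_Icc] with x hx
    simpa using hB x hx
  -- composition with projections
  have hsnd_map : Measure.map Prod.snd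
      ((volume.restrict (Icc (0:ℝ) 1)).prod (volume.restrict (Icc (0:ℝ) 1))) =
      volume.restrict (Icc (0:ℝ) 1) := by simp
  have hfst_map : Measure.map Prod.fst
      ((volume.restrict (Icc (0:ℝ) 1)).prod (volume.restrict (Icc (0:ℝ) 1))) =
      volume.restrict (Icc (0:ℝ) 1) := by simp
  have hcomp_snd : ∀ {g : ℝ → ℂ}, Integrable g (volume.restrict (Icc (0:ℝ) 1)) →
      Integrable (fun z : ℝ × ℝ => g z.2)
        ((volume.restrict (Icc (0:ℝ) 1)).prod (volume.restrict (Icc (0:ℝ) 1))) := by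
    intro g hg; rw [← hsnd_map] at hg; exact hg.comp_measurable measurable_snd
  have hcomp_fst : ∀ {g : ℝ → ℂ}, Integrable g (volume.restrict (Icc (0:ℝ) 1)) →
      Integrable (fun z : ℝ × ℝ => g z.1)
        ((volume.restrict (Icc (0:ℝ) 1)).prod (volume.restrict (Icc (0:ℝ) 1))) := by
    intro g hg; rw [← hfst_map] at hg; exact hg.comp_measurable measurable_fst
  have hint_eq : ∀ g : ℝ × ℝ → ℂ,
      (∫ q, g q ∂(volume.restrict ((Icc (0:ℝ) 1) ×ˢ (Icc (0:ℝ) 1)))) =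
      ∫ q, g q ∂((volume.restrict (Icc (0:ℝ) 1)).prod (volume.restrict (Icc (0:ℝ) 1))) :=
    fun g => by rw [hμν]
  have hae_eq : ∀ p : (ℝ × ℝ → Prop),
      (∀ᵐ q ∂(volume.restrict ((Icc (0:ℝ) 1) ×ˢ (Icc (0:ℝ) 1))), p q) ↔
      (∀ᵐ q ∂((volume.restrict (Icc (0:ℝ) 1)).prod (volume.restrict (Icc (0:ℝ) 1))), p q) :=
    fun p => by rw [hμν]
  have hfst_bound : ∀ᵐ z ∂((volume.restrict (Icc (0:ℝ) 1)).prod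
      (volume.restrict (Icc (0:ℝ) 1))), ‖(f z.1 : ℂ)‖ ≤ B :=
    (Measure.quasiMeasurePreserving_fst).ae hMae
  -- the key representation of `A ^ n`
  have key : ∀ n : ℕ, 1 ≤ n →
      ∀ u : Lp ℂ 2 (volume.restrict ((Icc (0:ℝ) 1) ×ˢ (Icc (0:ℝ) 1))),
        ((A ^ n) u : ℝ × ℝ → ℂ) =ᵐ[volume.restrict ((Icc (0:ℝ) 1) ×ˢ (Icc (0:ℝ) 1))]
        fun p => (-1 : ℂ) ^ n *
          ((∫ s in Icc (0 : ℝ) 1, (u : ℝ × ℝ → ℂ) (s, p.2)) +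
            (c : ℂ) ^ (n - 1) * (f p.1 : ℂ) *
              (∫ s in Icc (0 : ℝ) 1, (f s : ℂ) * (u : ℝ × ℝ → ℂ) (s, p.2)) +
            ((2 : ℂ) ^ n - 1) * ∫ q, (u : ℝ × ℝ → ℂ) q
              ∂(volume.restrict ((Icc (0:ℝ) 1) ×ˢ (Icc (0:ℝ) 1)))) := by
    intro n hn
    induction n, hn using Nat.le_induction with
    | base =>
      intro u
      rw [pow_one]
      filter_upwards [hA u] with p hp
      rw [hp]
      norm_num
      ring
    | succ n hn ih =>
      intro u
      have hcomp : (A ^ (n + 1)) u = A ((A ^ n) u) := by rw [pow_succ']; rfl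
      obtain ⟨m, rfl⟩ : ∃ m, n = m + 1 := ⟨n - 1, (Nat.sub_add_cancel hn).symm⟩
      have ihu := ih u
      simp only [Nat.add_sub_cancel] at ihu ⊢
      -- integrability of u
      have hu1 : Integrable (u : ℝ × ℝ → ℂ)
          ((volume.restrict (Icc (0:ℝ) 1)).prod (volume.restrict (Icc (0:ℝ) 1))) := by
        rw [← hμν]; exact (Lp.memLp u).integrable one_le_two
      have hw1 : Integrable (fun z : ℝ × ℝ => (f z.1 : ℂ) * (u : ℝ × ℝ → ℂ) z)
          ((volume.restrict (Icc (0:ℝ) 1)).prod (volume.restrict (Icc (0:ℝ) 1))) :=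
        hu1.bdd_mul ((hcomp_fst hfI).aestronglyMeasurable) hfst_bound
      have hI_int : Integrable (fun y => ∫ s in Icc (0:ℝ) 1, (u : ℝ × ℝ → ℂ) (s, y))
          (volume.restrict (Icc (0:ℝ) 1)) := hu1.integral_prod_right
      have hJ_int : Integrable (fun y => ∫ s in Icc (0:ℝ) 1, (f s : ℂ) *
          (u : ℝ × ℝ → ℂ) (s, y)) (volume.restrict (Icc (0:ℝ) 1)) := hw1.integral_prod_right
      -- a.e. slice description of v := (A ^ (m+1)) u
      have hv : ((A ^ (m+1)) u : ℝ × ℝ → ℂ)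
          =ᵐ[(volume.restrict (Icc (0:ℝ) 1)).prod (volume.restrict (Icc (0:ℝ) 1))]
          fun p => (-1 : ℂ) ^ (m+1) *
            ((∫ s in Icc (0:ℝ) 1, (u : ℝ × ℝ → ℂ) (s, p.2)) +
              (c : ℂ) ^ m * (f p.1 : ℂ) *
                (∫ s in Icc (0:ℝ) 1, (f s : ℂ) * (u : ℝ × ℝ → ℂ) (s, p.2)) +
              ((2 : ℂ) ^ (m+1) - 1) * ∫ q, (u : ℝ × ℝ → ℂ) q
                ∂(volume.restrict ((Icc (0:ℝ) 1) ×ˢ (Icc (0:ℝ) 1)))) := by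
        rw [← hμν]; exact ihu
      have hswap := (Measure.measurePreserving_swap
        (μ := volume.restrict (Icc (0:ℝ) 1))
        (ν := volume.restrict (Icc (0:ℝ) 1))).quasiMeasurePreserving.ae hv
      have hae : ∀ᵐ y ∂(volume.restrict (Icc (0:ℝ) 1)), ∀ᵐ x ∂(volume.restrict (Icc (0:ℝ) 1)),
          ((A ^ (m+1)) u : ℝ × ℝ → ℂ) (x, y) = (-1 : ℂ) ^ (m+1) *
            ((∫ s in Icc (0:ℝ) 1, (u : ℝ × ℝ → ℂ) (s, y)) +
              (c : ℂ) ^ m * (f x : ℂ) *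
                (∫ s in Icc (0:ℝ) 1, (f s : ℂ) * (u : ℝ × ℝ → ℂ) (s, y)) +
              ((2 : ℂ) ^ (m+1) - 1) * ∫ q, (u : ℝ × ℝ → ℂ) q
                ∂(volume.restrict ((Icc (0:ℝ) 1) ×ˢ (Icc (0:ℝ) 1)))) :=
        Measure.ae_ae_of_ae_prod hswap
      -- slice integrals
      have hgood : ∀ᵐ y ∂(volume.restrict (Icc (0:ℝ) 1)),
          (∫ x in Icc (0:ℝ) 1, ((A ^ (m+1)) u : ℝ × ℝ → ℂ) (x, y)) =
            (-1 : ℂ) ^ (m+1) * ((∫ s in Icc (0:ℝ) 1, (u : ℝ × ℝ → ℂ) (s, y)) +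
              ((2 : ℂ) ^ (m+1) - 1) * ∫ q, (u : ℝ × ℝ → ℂ) q
                ∂(volume.restrict ((Icc (0:ℝ) 1) ×ˢ (Icc (0:ℝ) 1)))) ∧
          (∫ x in Icc (0:ℝ) 1, (f x : ℂ) *
              ((A ^ (m+1)) u : ℝ × ℝ → ℂ) (x, y)) =
            (-1 : ℂ) ^ (m+1) * ((c : ℂ) ^ m * (c : ℂ)) *
              (∫ s in Icc (0:ℝ) 1, (f s : ℂ) * (u : ℝ × ℝ → ℂ) (s, y)) := by
        filter_upwards [hae] with y hy
        constructor
        · rw [integral_congr_ae hy]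
          have hfun : (fun x => ((fun p : ℝ × ℝ => (-1 : ℂ) ^ (m+1) *
              ((∫ s in Icc (0:ℝ) 1, (u : ℝ × ℝ → ℂ) (s, p.2)) +
                (c : ℂ) ^ m * (f p.1 : ℂ) *
                  (∫ s in Icc (0:ℝ) 1, (f s : ℂ) * (u : ℝ × ℝ → ℂ) (s, p.2)) +
                ((2 : ℂ) ^ (m+1) - 1) * ∫ q, (u : ℝ × ℝ → ℂ) q
                  ∂(volume.restrict ((Icc (0:ℝ) 1) ×ˢ (Icc (0:ℝ) 1))))) (x, y))) =
              fun x => ((-1 : ℂ) ^ (m+1) *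
                ((∫ s in Icc (0:ℝ) 1, (u : ℝ × ℝ → ℂ) (s, y)) +
                  ((2 : ℂ) ^ (m+1) - 1) * ∫ q, (u : ℝ × ℝ → ℂ) q
                    ∂(volume.restrict ((Icc (0:ℝ) 1) ×ˢ (Icc (0:ℝ) 1))))) +
                ((-1 : ℂ) ^ (m+1) * ((c : ℂ) ^ m *
                  (∫ s in Icc (0:ℝ) 1, (f s : ℂ) * (u : ℝ × ℝ → ℂ) (s, y)))) * (f x : ℂ) := by
            funext x; ring
          rw [hfun, integral_add (integrable_const _) (hfI.const_mul _), integral_const,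
            integral_const_mul, hIf, hν1]
          simp
        · have hy2 : (fun x => (f x : ℂ) * ((A ^ (m+1)) u : ℝ × ℝ → ℂ) (x, y)) =ᵐ[volume.restrict (Icc (0:ℝ) 1)]
              fun x => (f x : ℂ) * ((-1 : ℂ) ^ (m+1) *
                ((∫ s in Icc (0:ℝ) 1, (u : ℝ × ℝ → ℂ) (s, y)) +
                  (c : ℂ) ^ m * (f x : ℂ) *
                    (∫ s in Icc (0:ℝ) 1, (f s : ℂ) * (u : ℝ × ℝ → ℂ) (s, y)) +
                  ((2 : ℂ) ^ (m+1) - 1) * ∫ q, (u : ℝ × ℝ → ℂ) q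
                    ∂(volume.restrict ((Icc (0:ℝ) 1) ×ˢ (Icc (0:ℝ) 1))))) :=
            hy.mono fun x hx => congrArg (fun t => (f x : ℂ) * t) hx
          rw [integral_congr_ae hy2]
          have hfun : (fun x => (f x : ℂ) * ((fun p : ℝ × ℝ => (-1 : ℂ) ^ (m+1) *
              ((∫ s in Icc (0:ℝ) 1, (u : ℝ × ℝ → ℂ) (s, p.2)) +
                (c : ℂ) ^ m * (f p.1 : ℂ) *
                  (∫ s in Icc (0:ℝ) 1, (f s : ℂ) * (u : ℝ × ℝ → ℂ) (s, p.2)) +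
                ((2 : ℂ) ^ (m+1) - 1) * ∫ q, (u : ℝ × ℝ → ℂ) q
                  ∂(volume.restrict ((Icc (0:ℝ) 1) ×ˢ (Icc (0:ℝ) 1))))) (x, y))) =
              fun x => ((-1 : ℂ) ^ (m+1) *
                ((∫ s in Icc (0:ℝ) 1, (u : ℝ × ℝ → ℂ) (s, y)) +
                  ((2 : ℂ) ^ (m+1) - 1) * ∫ q, (u : ℝ × ℝ → ℂ) q
                    ∂(volume.restrict ((Icc (0:ℝ) 1) ×ˢ (Icc (0:ℝ) 1))))) * (f x : ℂ) +
                ((-1 : ℂ) ^ (m+1) * ((c : ℂ) ^ m *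
                  (∫ s in Icc (0:ℝ) 1, (f s : ℂ) * (u : ℝ × ℝ → ℂ) (s, y)))) *
                    (f x : ℂ) ^ 2 := by
            funext x; ring
          rw [hfun, integral_add (hfI.const_mul _) (hf2I.const_mul _), integral_const_mul,
            integral_const_mul, hIf, hIf2]
          ring
      -- total integral of v
      have hKI : (∫ q, (u : ℝ × ℝ → ℂ) q
            ∂(volume.restrict ((Icc (0:ℝ) 1) ×ˢ (Icc (0:ℝ) 1)))) =
          ∫ y in Icc (0:ℝ) 1, ∫ x in Icc (0:ℝ) 1, (u : ℝ × ℝ → ℂ) (x, y) := by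
        rw [hint_eq]; exact integral_prod_symm _ hu1
      have hS3 : (∫ q, ((A ^ (m+1)) u : ℝ × ℝ → ℂ) q
            ∂(volume.restrict ((Icc (0:ℝ) 1) ×ˢ (Icc (0:ℝ) 1)))) =
          (-1 : ℂ) ^ (m+1) * (2 : ℂ) ^ (m+1) *
            ∫ q, (u : ℝ × ℝ → ℂ) q ∂(volume.restrict ((Icc (0:ℝ) 1) ×ˢ (Icc (0:ℝ) 1))) := by
        rw [integral_congr_ae ihu, hint_eq]
        have hfun : (fun p : ℝ × ℝ => (-1 : ℂ) ^ (m+1) *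
            ((∫ s in Icc (0:ℝ) 1, (u : ℝ × ℝ → ℂ) (s, p.2)) +
              (c : ℂ) ^ m * (f p.1 : ℂ) *
                (∫ s in Icc (0:ℝ) 1, (f s : ℂ) * (u : ℝ × ℝ → ℂ) (s, p.2)) +
              ((2 : ℂ) ^ (m+1) - 1) * ∫ q, (u : ℝ × ℝ → ℂ) q
                ∂(volume.restrict ((Icc (0:ℝ) 1) ×ˢ (Icc (0:ℝ) 1))))) =
            fun z : ℝ × ℝ => ((-1 : ℂ) ^ (m+1) *
                (∫ s in Icc (0:ℝ) 1, (u : ℝ × ℝ → ℂ) (s, z.2)) +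
              ((-1 : ℂ) ^ (m+1) * (c : ℂ) ^ m) * ((f z.1 : ℂ) *
                ∫ s in Icc (0:ℝ) 1, (f s : ℂ) * (u : ℝ × ℝ → ℂ) (s, z.2))) +
              (-1 : ℂ) ^ (m+1) * ((2 : ℂ) ^ (m+1) - 1) *
                ∫ q, (u : ℝ × ℝ → ℂ) q
                  ∂(volume.restrict ((Icc (0:ℝ) 1) ×ˢ (Icc (0:ℝ) 1))) := by
          funext z; ring
        rw [hfun]
        have h1 : Integrable (fun z : ℝ × ℝ => (-1 : ℂ) ^ (m+1) *
            ∫ s in Icc (0:ℝ) 1, (u : ℝ × ℝ → ℂ) (s, z.2))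
            ((volume.restrict (Icc (0:ℝ) 1)).prod (volume.restrict (Icc (0:ℝ) 1))) :=
          (hcomp_snd hI_int).const_mul _
        have h2 : Integrable (fun z : ℝ × ℝ =>
            ((-1 : ℂ) ^ (m+1) * (c : ℂ) ^ m) * ((f z.1 : ℂ) *
              ∫ s in Icc (0:ℝ) 1, (f s : ℂ) * (u : ℝ × ℝ → ℂ) (s, z.2)))
            ((volume.restrict (Icc (0:ℝ) 1)).prod (volume.restrict (Icc (0:ℝ) 1))) :=
          ((hcomp_snd hJ_int).bdd_mul ((hcomp_fst hfI).aestronglyMeasurable)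
            hfst_bound).const_mul _
        have h12 : Integrable (fun z : ℝ × ℝ => (-1 : ℂ) ^ (m+1) *
            (∫ s in Icc (0:ℝ) 1, (u : ℝ × ℝ → ℂ) (s, z.2)) +
            ((-1 : ℂ) ^ (m+1) * (c : ℂ) ^ m) * ((f z.1 : ℂ) *
              ∫ s in Icc (0:ℝ) 1, (f s : ℂ) * (u : ℝ × ℝ → ℂ) (s, z.2)))
            ((volume.restrict (Icc (0:ℝ) 1)).prod (volume.restrict (Icc (0:ℝ) 1))) :=
          h1.add h2
        have hzero : (∫ z : ℝ × ℝ, (f z.1 : ℂ) *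
            (∫ s in Icc (0:ℝ) 1, (f s : ℂ) * (u : ℝ × ℝ → ℂ) (s, z.2))
            ∂((volume.restrict (Icc (0:ℝ) 1)).prod (volume.restrict (Icc (0:ℝ) 1)))) = 0 := by
          have := integral_prod_mul (μ := volume.restrict (Icc (0:ℝ) 1))
            (ν := volume.restrict (Icc (0:ℝ) 1)) (fun x => (f x : ℂ))
            (fun y => ∫ s in Icc (0:ℝ) 1, (f s : ℂ) * (u : ℝ × ℝ → ℂ) (s, y))
          simpa [hIf] using this
        have h3 : (∫ z : ℝ × ℝ, (∫ s in Icc (0:ℝ) 1, (u : ℝ × ℝ → ℂ) (s, z.2))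
            ∂((volume.restrict (Icc (0:ℝ) 1)).prod (volume.restrict (Icc (0:ℝ) 1)))) =
            ∫ y in Icc (0:ℝ) 1, ∫ s in Icc (0:ℝ) 1, (u : ℝ × ℝ → ℂ) (s, y) := by
          have := integral_fun_snd (μ := volume.restrict (Icc (0:ℝ) 1))
            (ν := volume.restrict (Icc (0:ℝ) 1))
            (fun y => ∫ s in Icc (0:ℝ) 1, (u : ℝ × ℝ → ℂ) (s, y))
          simpa using this
        rw [integral_add h12 (integrable_const _), integral_add h1 h2,
          integral_const_mul, integral_const_mul, hzero, h3, ← hKI, integral_const]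
        simp
        ring
      -- lift slice facts to the product
      have hlift := (Measure.quasiMeasurePreserving_snd (μ := volume.restrict (Icc (0:ℝ) 1))
        (ν := volume.restrict (Icc (0:ℝ) 1))).ae hgood
      rw [hcomp]
      have hlift' : ∀ᵐ p ∂(volume.restrict ((Icc (0:ℝ) 1) ×ˢ (Icc (0:ℝ) 1))),
          (∫ x in Icc (0:ℝ) 1, ((A ^ (m+1)) u : ℝ × ℝ → ℂ) (x, p.2)) =
            (-1 : ℂ) ^ (m+1) * ((∫ s in Icc (0:ℝ) 1, (u : ℝ × ℝ → ℂ) (s, p.2)) +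
              ((2 : ℂ) ^ (m+1) - 1) * ∫ q, (u : ℝ × ℝ → ℂ) q
                ∂(volume.restrict ((Icc (0:ℝ) 1) ×ˢ (Icc (0:ℝ) 1)))) ∧
          (∫ x in Icc (0:ℝ) 1, (f x : ℂ) *
              ((A ^ (m+1)) u : ℝ × ℝ → ℂ) (x, p.2)) =
            (-1 : ℂ) ^ (m+1) * ((c : ℂ) ^ m * (c : ℂ)) *
              (∫ s in Icc (0:ℝ) 1, (f s : ℂ) * (u : ℝ × ℝ → ℂ) (s, p.2)) := by
        exact (hae_eq _).mpr hlift
      filter_upwards [hA ((A ^ (m+1)) u), hlift'] with p hp hgp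
      rw [hp, hgp.1, hgp.2, hS3]
      have hcpow : (c : ℂ) ^ m * (c : ℂ) = (c : ℂ) ^ (m + 1) := (pow_succ _ _).symm
      rw [hcpow]
      ring
  refine fun n hn => ⟨key n hn, ?_⟩
  -- the trace identity
  have hmid : (∫ s in Icc (0 : ℝ) 1, (-1 : ℂ) ^ n * (1 + (c : ℂ) ^ (n - 1) * (f s : ℂ) ^ 2)) =
      (-1 : ℂ) ^ n * (1 + (c : ℂ) ^ n) := by
    rw [integral_const_mul, integral_add (integrable_const _) (hf2I.const_mul _), integral_const,
      integral_const_mul, hIf2, hν1]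
    have hcpow : (c : ℂ) ^ (n - 1) * (c : ℂ) = (c : ℂ) ^ n := by
      rw [← pow_succ, Nat.sub_add_cancel hn]
    rw [one_smul, hcpow]
  rw [hmid]
end

section
/- Let G be a group and suppose G = F₀F₁⋯F_N where each Fⱼ ≤ G is a subgroup, the decomposition g = g₀g₁⋯g_N with gⱼ ∈ Fⱼ is unique for every g ∈ G, and for each j there is a group homomorphism πⱼ : Fⱼ → ℂ* such that for all i ≠ j and a ∈ F_i, b ∈ Fⱼ, the rearrangement a·b = b'·a' (with b' ∈ Fⱼ, a' ∈ F_i the unique such elements) satisfies πⱼ(b') = πⱼ(b) and π_i(a') = π_i(a). Then the map 𝛑 : G → (ℂ*)^{N+1} defined by 𝛑(g) = (π₀(g₀), …, π_N(g_N)) is a group homomorphism. -/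
private lemma forall2_comp' {α β γ : Type*} {R : α → β → Prop} {S : β → γ → Prop}
    {T : α → γ → Prop} (hT : ∀ a b c, R a b → S b c → T a c) :
    ∀ {l₁ l₂ l₃ : List _}, List.Forall₂ R l₁ l₂ → List.Forall₂ S l₂ l₃ →
      List.Forall₂ T l₁ l₃ := by
  intro l₁ l₂ l₃ h1
  induction h1 generalizing l₃ with
  | nil => intro h2; cases h2; exact .nil
  | cons hr _ ih =>
    intro h2
    cases h2 with
    | cons hs h2' => exact .cons (hT _ _ _ hr hs) (ih h2')

private lemma forall2_map' {α β γ : Type*} {R : α → β → Prop} {f : α → γ} {g : β → γ}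
    (h : ∀ a b, R a b → f a = g b) :
    ∀ {l₁ l₂}, List.Forall₂ R l₁ l₂ → l₁.map f = l₂.map g := by
  intro l₁ l₂ h12
  induction h12 with
  | nil => rfl
  | cons hr _ ih => simp [h _ _ hr, ih]

private lemma bubble17 {G : Type*} [Group G] {N : ℕ} (F : Fin (N + 1) → Subgroup G)
    (p : Fin (N + 1) → G → ℂˣ)
    (hre : ∀ i j, i ≠ j → ∀ a ∈ F i, ∀ b ∈ F j, ∃ a' ∈ F i, ∃ b' ∈ F j,
      a * b = b' * a' ∧ p i a' = p i a ∧ p j b' = p j b) :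
    ∀ (l : List (Fin (N + 1) × G × G)) (j : Fin (N + 1)) (b : G), b ∈ F j →
      (∀ x ∈ l, x.2.1 ∈ F x.1) → (∀ x ∈ l, x.1 ≠ j) →
      ∃ b', b' ∈ F j ∧ p j b' = p j b ∧
        ∃ l' : List (Fin (N + 1) × G × G),
          List.Forall₂ (fun x y : Fin (N + 1) × G × G => x.1 = y.1 ∧ x.2.1 ∈ F x.1 ∧
            p x.1 x.2.1 = p y.1 y.2.1 ∧ x.2.2 = y.2.2) l' l ∧
          (l.map (fun x => x.2.1)).prod * b = b' * (l'.map (fun x => x.2.1)).prod := by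
  intro l
  induction l with
  | nil =>
    intro j b hb _ _
    exact ⟨b, hb, rfl, [], .nil, by simp⟩
  | cons x t ih =>
    intro j b hb hmem hne
    obtain ⟨b₁, hb₁, hpb₁, t', ht', hprodt⟩ :=
      ih j b hb (fun y hy => hmem y (List.mem_cons_of_mem _ hy))
        (fun y hy => hne y (List.mem_cons_of_mem _ hy))
    obtain ⟨a', ha', b', hb', heq, hpa', hpb'⟩ :=
      hre x.1 j (hne x (List.mem_cons_self)) x.2.1 (hmem x (List.mem_cons_self)) b₁ hb₁
    refine ⟨b', hb', hpb'.trans hpb₁, (x.1, a', x.2.2) :: t',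
      .cons ⟨rfl, ha', hpa', rfl⟩ ht', ?_⟩
    simp only [List.map_cons, List.prod_cons]
    calc x.2.1 * (t.map (fun x => x.2.1)).prod * b
        = x.2.1 * ((t.map (fun x => x.2.1)).prod * b) := by group
      _ = x.2.1 * (b₁ * (t'.map (fun x => x.2.1)).prod) := by rw [hprodt]
      _ = (x.2.1 * b₁) * (t'.map (fun x => x.2.1)).prod := by group
      _ = b' * (a' * (t'.map (fun x => x.2.1)).prod) := by rw [heq]; group

private lemma forall2_mem' {α β : Type*} {R : α → β → Prop} :
    ∀ {l₁ : List α} {l₂ : List β}, List.Forall₂ R l₁ l₂ →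
      ∀ a ∈ l₁, ∃ b ∈ l₂, R a b := by
  intro l₁ l₂ h
  induction h with
  | nil => intro a ha; simp at ha
  | cons hr _ ih =>
    intro a ha
    rcases List.mem_cons.mp ha with rfl | ha
    · exact ⟨_, List.mem_cons_self, hr⟩
    · obtain ⟨b, hb, hab⟩ := ih a ha
      exact ⟨b, List.mem_cons_of_mem _ hb, hab⟩

private lemma merge17 {G : Type*} [Group G] {N : ℕ} (F : Fin (N + 1) → Subgroup G)
    (p : Fin (N + 1) → G → ℂˣ)
    (hhom : ∀ j, ∀ a ∈ F j, ∀ b ∈ F j, p j (a * b) = p j a * p j b)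
    (hre : ∀ i j, i ≠ j → ∀ a ∈ F i, ∀ b ∈ F j, ∃ a' ∈ F i, ∃ b' ∈ F j,
      a * b = b' * a' ∧ p i a' = p i a ∧ p j b' = p j b) :
    ∀ (n : ℕ) (l : List (Fin (N + 1) × G × G)), l.length = n →
      (l.map Prod.fst).Nodup →
      (∀ x ∈ l, x.2.1 ∈ F x.1) → (∀ x ∈ l, x.2.2 ∈ F x.1) →
      ∃ l' : List (Fin (N + 1) × G),
        List.Forall₂ (fun (x : Fin (N + 1) × G) (y : Fin (N + 1) × G × G) =>
          x.1 = y.1 ∧ x.2 ∈ F x.1 ∧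
          p x.1 x.2 = p y.1 y.2.1 * p y.1 y.2.2) l' l ∧
        (l.map (fun x => x.2.1)).prod * (l.map (fun x => x.2.2)).prod
          = (l'.map Prod.snd).prod := by
  intro n
  induction n with
  | zero =>
    intro l hl _ _ _
    rw [List.length_eq_zero_iff] at hl
    subst hl
    exact ⟨[], .nil, by simp⟩
  | succ n ih =>
    rintro (_ | ⟨x, t⟩) hl hnd hmem1 hmem2
    · simp at hl
    simp only [List.length_cons, Nat.succ.injEq] at hl
    simp only [List.map_cons, List.nodup_cons] at hnd
    -- move x.2.2 across the g-components of t
    obtain ⟨b', hb', hpb', t₂, ht₂, hprodt⟩ :=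
      bubble17 F p hre t x.1 x.2.2 (hmem2 x (List.mem_cons_self))
        (fun y hy => hmem1 y (List.mem_cons_of_mem _ hy))
        (fun y hy hyx => hnd.1 (by rw [← hyx]; exact List.mem_map_of_mem (f := Prod.fst) hy))
    have hfst : t₂.map Prod.fst = t.map Prod.fst :=
      forall2_map' (fun a b h => h.1) ht₂
    have hsnd : t₂.map (fun x => x.2.2) = t.map (fun x => x.2.2) :=
      forall2_map' (fun a b h => h.2.2.2) ht₂
    have hmem1' : ∀ y ∈ t₂, y.2.1 ∈ F y.1 := fun y hy =>
      (forall2_mem' ht₂ y hy).choose_spec.2.2.1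
    have hmem2' : ∀ y ∈ t₂, y.2.2 ∈ F y.1 := by
      intro y hy
      obtain ⟨z, hz, h1, _, _, h4⟩ := forall2_mem' ht₂ y hy
      rw [h1, h4]
      exact hmem2 z (List.mem_cons_of_mem _ hz)
    obtain ⟨t₃, ht₃, hprod3⟩ := ih t₂ (ht₂.length_eq.trans hl) (hfst ▸ hnd.2) hmem1' hmem2'
    refine ⟨(x.1, x.2.1 * b') :: t₃, .cons ⟨rfl, mul_mem (hmem1 x (List.mem_cons_self)) hb', ?_⟩
      (forall2_comp' (T := fun (a : Fin (N + 1) × G) (c : Fin (N + 1) × G × G) =>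
          a.1 = c.1 ∧ a.2 ∈ F a.1 ∧ p a.1 a.2 = p c.1 c.2.1 * p c.1 c.2.2) ?_ ht₃ ht₂), ?_⟩
    · rw [hhom x.1 x.2.1 (hmem1 x (List.mem_cons_self)) b' hb', hpb']
    · rintro a b c ⟨h1, h2, h3⟩ ⟨h4, _, h5, h6⟩
      refine ⟨h1.trans h4, h2, ?_⟩
      rw [h3, h5, h6, h4]
    · simp only [List.map_cons, List.prod_cons]
      calc x.2.1 * (t.map (fun x => x.2.1)).prod * (x.2.2 * (t.map (fun x => x.2.2)).prod)
          = x.2.1 * ((t.map (fun x => x.2.1)).prod * x.2.2) * (t.map (fun x => x.2.2)).prod := by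
            group
        _ = x.2.1 * (b' * (t₂.map (fun x => x.2.1)).prod) * (t₂.map (fun x => x.2.2)).prod := by
            rw [hprodt, hsnd]
        _ = (x.2.1 * b') * ((t₂.map (fun x => x.2.1)).prod * (t₂.map (fun x => x.2.2)).prod) := by
            group
        _ = (x.2.1 * b') * (t₃.map Prod.snd).prod := by rw [hprod3]

/-- A group with a unique ordered factorization into subgroups `F₀,…,F_N`, each
carrying a character compatible with rearrangements, admits a product character:
`𝛑(gh) = 𝛑(g)𝛑(h)` componentwise. -/
theorem stmt17 {G : Type*} [Group G] (N : ℕ) (F : Fin (N + 1) → Subgroup G)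
    (fac : G → Fin (N + 1) → G)
    (hmem : ∀ g j, fac g j ∈ F j)
    (hprod : ∀ g, (List.ofFn (fac g)).prod = g)
    (huniq : ∀ g (h : Fin (N + 1) → G), (∀ j, h j ∈ F j) →
      (List.ofFn h).prod = g → h = fac g)
    (p : Fin (N + 1) → G → ℂˣ)
    (hhom : ∀ j, ∀ a ∈ F j, ∀ b ∈ F j, p j (a * b) = p j a * p j b)
    (hre : ∀ i j, i ≠ j → ∀ a ∈ F i, ∀ b ∈ F j, ∃ a' ∈ F i, ∃ b' ∈ F j,
      a * b = b' * a' ∧ p i a' = p i a ∧ p j b' = p j b) :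
    ∀ g h : G, ∀ j, p j (fac (g * h) j) = p j (fac g j) * p j (fac h j) := by
  intro g h j
  set l : List (Fin (N + 1) × G × G) := List.ofFn (fun j => (j, fac g j, fac h j)) with hld
  have hnd : (l.map Prod.fst).Nodup := by
    simp only [hld, List.map_ofFn]
    exact List.nodup_ofFn.mpr (fun a b hab => hab)
  have hg : l.map (fun x => x.2.1) = List.ofFn (fac g) := by
    simp [hld, List.map_ofFn, Function.comp_def]
  have hh : l.map (fun x => x.2.2) = List.ofFn (fac h) := by
    simp [hld, List.map_ofFn, Function.comp_def]
  have hmem1 : ∀ x ∈ l, x.2.1 ∈ F x.1 := by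
    intro x hx
    simp only [hld, List.mem_ofFn] at hx
    obtain ⟨i, rfl⟩ := hx
    exact hmem g i
  have hmem2 : ∀ x ∈ l, x.2.2 ∈ F x.1 := by
    intro x hx
    simp only [hld, List.mem_ofFn] at hx
    obtain ⟨i, rfl⟩ := hx
    exact hmem h i
  obtain ⟨l', hl', hpl⟩ := merge17 F p hhom hre l.length l rfl hnd hmem1 hmem2
  have hlen : l'.length = N + 1 := hl'.length_eq.trans (by simp [hld])
  have hget := (List.forall₂_iff_get.mp hl').2
  have hil : ∀ i : Fin (N + 1), (i : ℕ) < l'.length := fun i => by rw [hlen]; exact i.isLt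
  set k : Fin (N + 1) → G := fun i => (l'.get ⟨i, hil i⟩).2 with hkd
  have hfact : ∀ i : Fin (N + 1), k i ∈ F i ∧ p i (k i) = p i (fac g i) * p i (fac h i) := by
    intro i
    have hi2 : (i : ℕ) < l.length := by simp [hld]; omega
    have hrel := hget i (hil i) hi2
    have hgetl : l.get ⟨(i : ℕ), hi2⟩ = (i, fac g i, fac h i) := by
      show (List.ofFn (fun j => (j, fac g j, fac h j))).get ⟨(i : ℕ), hi2⟩ = _
      rw [List.get_ofFn]
      simp
    rw [hgetl] at hrel
    obtain ⟨h1, h2, h3⟩ := hrel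
    rw [h1] at h2 h3
    exact ⟨h2, h3⟩
  have hkof : List.ofFn k = l'.map Prod.snd := by
    refine List.ext_get (by simp [hlen]) ?_
    intro i h1 h2
    rw [List.get_ofFn, List.get_eq_getElem, List.getElem_map]
    rfl
  have hkprod : (List.ofFn k).prod = g * h := by
    rw [hkof, ← hpl, hg, hh, hprod, hprod]
  have hk := huniq (g * h) k (fun i => (hfact i).1) hkprod
  rw [← hk]
  exact (hfact j).2
end
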